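/- Let G be a finite undirected graph with degree matrix D and adjacency matrix A, and fix a real number r > 1 and an integer p with 2 ≤ p ≤ n. If the p-th smallest eigenvalue s of the symmetric matrix D - r·A is strictly negative, then 1/r is the p-th largest eigenvalue of the regularized random-walk Laplacian L = (D + (-s)·I)⁻¹ A, and any eigenvector of D - r·A for eigenvalue s is an eigenvector of L for eigenvalue 1/r. -/

import Mathlib

open Matrix

/-- Ascending list of eigenvalues (with multiplicity) of a Hermitian real matrix:
`sortEig hM i` is the `(i+1)`-th smallest eigenvalue of `M`. -/
noncomputable def sortEig {n : ℕ} {M : Matrix (Fin n) (Fin n) ℝ} (hM : M.IsHermitian) :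
    Fin n → ℝ :=
  fun i => hM.eigenvalues (Tuple.sort hM.eigenvalues i)

/-- The `(p+1)`-th largest root (0-based `p`) of the characteristic polynomial of `M`. -/
noncomputable def kthLargestRoot {n : ℕ} (M : Matrix (Fin n) (Fin n) ℝ) (p : ℕ) : ℝ :=
  (M.charpoly.roots.sort (· ≤ ·)).getD (n - 1 - p) 0

open Polynomial

/-- charpoly is invariant under conjugation by an invertible matrix. -/
lemma charpoly_conj' {n : ℕ} (P M : Matrix (Fin n) (Fin n) ℝ) (hP : IsUnit P.det) :
    (P * M * P⁻¹).charpoly = M.charpoly := by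
  set P' := (C : ℝ →+* ℝ[X]).mapMatrix P with hP'
  set Q' := (C : ℝ →+* ℝ[X]).mapMatrix P⁻¹ with hQ'
  have hPQ : P' * Q' = 1 := by
    rw [hP', hQ', ← _root_.map_mul, Matrix.mul_nonsing_inv _ hP, _root_.map_one]
  have h1 : Matrix.charmatrix (P * M * P⁻¹) = P' * Matrix.charmatrix M * Q' := by
    simp only [Matrix.charmatrix, Matrix.mul_sub, Matrix.sub_mul]
    congr 1
    · rw [← (Matrix.scalar_commute (X : ℝ[X]) (fun r' => Commute.all _ _) P').eq,
        Matrix.mul_assoc, hPQ, Matrix.mul_one]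
    · rw [hP', hQ', ← _root_.map_mul, ← _root_.map_mul]
  have hdet : P'.det * Q'.det = 1 := by
    rw [← Matrix.det_mul, hPQ, Matrix.det_one]
  rw [Matrix.charpoly, Matrix.charpoly, h1, Matrix.det_mul, Matrix.det_mul]
  calc P'.det * (Matrix.charmatrix M).det * Q'.det
      = P'.det * Q'.det * (Matrix.charmatrix M).det := by ring
    _ = (Matrix.charmatrix M).det := by rw [hdet, one_mul]

lemma charpoly_diagonal' {n : ℕ} (v : Fin n → ℝ) :
    (Matrix.diagonal v).charpoly = ∏ i, (X - C (v i)) := by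
  rw [Matrix.charpoly]
  have : Matrix.charmatrix (Matrix.diagonal v) = Matrix.diagonal (fun i => X - C (v i)) := by
    ext i j
    by_cases h : i = j <;> simp [h, Matrix.charmatrix_apply, Matrix.diagonal_apply]
  rw [this, Matrix.det_diagonal]

/-- roots of the charpoly of a real symmetric matrix: the multiset of eigenvalues. -/
lemma roots_charpoly {n : ℕ} (M : Matrix (Fin n) (Fin n) ℝ) (hM : M.IsHermitian) :
    M.charpoly.roots = Multiset.map hM.eigenvalues Finset.univ.val := by
  have hU := hM.spectral_theorem
  have hUu : (hM.eigenvectorUnitary : Matrix (Fin n) (Fin n) ℝ)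
      * star (hM.eigenvectorUnitary : Matrix (Fin n) (Fin n) ℝ) = 1 :=
    Matrix.mem_unitaryGroup_iff.mp hM.eigenvectorUnitary.2
  have hdet : IsUnit (hM.eigenvectorUnitary : Matrix (Fin n) (Fin n) ℝ).det :=
    Matrix.isUnit_det_of_right_inverse hUu
  have hinv : (hM.eigenvectorUnitary : Matrix (Fin n) (Fin n) ℝ)⁻¹
      = star (hM.eigenvectorUnitary : Matrix (Fin n) (Fin n) ℝ) := Matrix.inv_eq_right_inv hUu
  have h3 : M.charpoly = (Matrix.diagonal (RCLike.ofReal ∘ hM.eigenvalues)).charpoly := by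
    conv_lhs => rw [hU, Unitary.conjStarAlgAut_apply, ← hinv]
    exact charpoly_conj' _ _ hdet
  have h4 : (RCLike.ofReal ∘ hM.eigenvalues : Fin n → ℝ) = hM.eigenvalues := by
    funext i; simp
  rw [h3, h4, charpoly_diagonal']
  have : (∏ i, (X - C (hM.eigenvalues i)))
      = ((Multiset.map hM.eigenvalues Finset.univ.val).map (fun a => X - C a)).prod := by
    rw [Multiset.map_map]; rfl
  rw [this, Polynomial.roots_multiset_prod_X_sub_C]

open Matrix

variable {n : ℕ} {X : Matrix (Fin n) (Fin n) ℝ}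

noncomputable def vE (hX : X.IsHermitian) (i : Fin n) : Fin n → ℝ :=
  ⇑(hX.eigenvectorBasis i)

lemma dot_vE (hX : X.IsHermitian) (i j : Fin n) :
    vE hX i ⬝ᵥ vE hX j = if i = j then 1 else 0 := by
  have := (orthonormal_iff_ite (𝕜 := ℝ)).mp hX.eigenvectorBasis.orthonormal i j
  rw [← this]
  simp [PiLp.inner_apply, RCLike.inner_apply, dotProduct, vE, mul_comm]

lemma linIndep_vE (hX : X.IsHermitian) : LinearIndependent ℝ (vE hX) := by
  have h := hX.eigenvectorBasis.orthonormal.linearIndependent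
  exact h.map' (WithLp.linearEquiv 2 ℝ (Fin n → ℝ)).toLinearMap
    (LinearEquiv.ker _)

lemma mulVec_vE (hX : X.IsHermitian) (i : Fin n) :
    X *ᵥ vE hX i = hX.eigenvalues i • vE hX i := hX.mulVec_eigenvectorBasis i

lemma dotProduct_finsum {ι : Type*} (s : Finset ι) (f : ι → Fin n → ℝ) (w : Fin n → ℝ) :
    w ⬝ᵥ (∑ i ∈ s, f i) = ∑ i ∈ s, w ⬝ᵥ f i := by
  classical
  induction s using Finset.cons_induction with
  | empty => simp
  | cons a s ha ih => rw [Finset.sum_cons, Finset.sum_cons, dotProduct_add, ih]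

lemma finsum_dotProduct {ι : Type*} (s : Finset ι) (f : ι → Fin n → ℝ) (w : Fin n → ℝ) :
    (∑ i ∈ s, f i) ⬝ᵥ w = ∑ i ∈ s, f i ⬝ᵥ w := by
  classical
  induction s using Finset.cons_induction with
  | empty => simp
  | cons a s ha ih => rw [Finset.sum_cons, Finset.sum_cons, add_dotProduct, ih]

/-- Key computation: quadratic form on the span of a set of eigenvectors. -/
lemma key_quad (hX : X.IsHermitian) (T : Finset (Fin n)) (c : ℝ) (x : Fin n → ℝ)
    (hx : x ∈ Submodule.span ℝ (Set.range fun i : T => vE hX i)) :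
    ∃ u : T → ℝ, (x ⬝ᵥ (X *ᵥ x) - c * (x ⬝ᵥ x) = ∑ i, (hX.eigenvalues i.1 - c) * u i ^ 2)
      ∧ (x ≠ 0 → ∃ i, u i ≠ 0) := by
  obtain ⟨u, hu⟩ := (Submodule.mem_span_range_iff_exists_fun ℝ).mp hx
  refine ⟨u, ?_, ?_⟩
  · have hXx : X *ᵥ x = ∑ i : T, (u i * hX.eigenvalues i.1) • vE hX i.1 := by
      rw [← hu]
      have : X *ᵥ (∑ i : T, u i • vE hX i.1) = X.mulVecLin (∑ i : T, u i • vE hX i.1) := rfl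
      rw [this, map_sum]
      refine Finset.sum_congr rfl fun i _ => ?_
      rw [_root_.map_smul]
      simp only [Matrix.mulVecLin_apply, mulVec_vE, smul_smul]
    have pair : ∀ b : T → ℝ, x ⬝ᵥ (∑ j : T, b j • vE hX j.1) = ∑ j : T, u j * b j := by
      intro b
      rw [dotProduct_finsum]
      refine Finset.sum_congr rfl fun j _ => ?_
      rw [← hu, dotProduct_smul, finsum_dotProduct]
      have : ∀ i : T, (u i • vE hX i.1) ⬝ᵥ vE hX j.1 = u i * if i.1 = j.1 then 1 else 0 := by
        intro i; rw [smul_dotProduct, dot_vE]; simp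
      rw [Finset.sum_congr rfl fun i _ => this i]
      have h2 : (∑ i : T, (u i * if (i : Fin n) = (j : Fin n) then 1 else 0))
          = ∑ i : T, if i = j then u i else 0 := by
        refine Finset.sum_congr rfl fun i _ => ?_
        by_cases h : i = j
        · simp [h]
        · have : (i : Fin n) ≠ (j : Fin n) := fun hc => h (Subtype.ext hc)
          simp [h, this]
      rw [h2, Finset.sum_ite_eq' Finset.univ j u]
      simp [mul_comm]
    have hq : x ⬝ᵥ (X *ᵥ x) = ∑ j : T, u j * (u j * hX.eigenvalues j.1) := by
      rw [hXx]; exact pair _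
    have hn : x ⬝ᵥ x = ∑ j : T, u j * u j := by
      nth_rewrite 2 [← hu]
      exact pair _
    rw [hq, hn, Finset.mul_sum, ← Finset.sum_sub_distrib]
    refine Finset.sum_congr rfl fun i _ => ?_
    ring
  · intro hxne
    by_contra h
    push_neg at h
    apply hxne
    rw [← hu]
    simp only [h, zero_smul, Finset.sum_const_zero]

lemma finrank_span_vE (hX : X.IsHermitian) (T : Finset (Fin n)) :
    Module.finrank ℝ (Submodule.span ℝ (Set.range fun i : T => vE hX i)) = T.card := by
  have h : (fun i : T => vE hX i) = vE hX ∘ Subtype.val := rfl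
  rw [h, finrank_span_eq_card ((linIndep_vE hX).comp Subtype.val Subtype.val_injective)]
  exact Fintype.card_coe T

lemma exists_ne_zero_mem_inf (W U : Submodule ℝ (Fin n → ℝ))
    (h : n < Module.finrank ℝ W + Module.finrank ℝ U) :
    ∃ x : Fin n → ℝ, x ∈ W ∧ x ∈ U ∧ x ≠ 0 := by
  have htop : Module.finrank ℝ (Fin n → ℝ) = n := by simp
  have hsup : Module.finrank ℝ ↥(W ⊔ U) ≤ n :=
    le_trans (Submodule.finrank_le _) (le_of_eq htop)
  have hinf := Submodule.finrank_sup_add_finrank_inf_eq W U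
  have hne : W ⊓ U ≠ ⊥ := by
    intro hbot
    rw [hbot, finrank_bot] at hinf
    omega
  obtain ⟨x, hx, hx0⟩ := Submodule.exists_mem_ne_zero_of_ne_bot hne
  exact ⟨x, hx.1, hx.2, hx0⟩

lemma exists_le_subspace (hX : X.IsHermitian) (c : ℝ) :
    ∃ W : Submodule ℝ (Fin n → ℝ),
      Module.finrank ℝ W = (Finset.univ.filter fun i => hX.eigenvalues i ≤ c).card ∧
      ∀ x ∈ W, x ⬝ᵥ (X *ᵥ x) ≤ c * (x ⬝ᵥ x) := by
  set T := Finset.univ.filter fun i => hX.eigenvalues i ≤ c with hT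
  refine ⟨Submodule.span ℝ (Set.range fun i : T => vE hX i), finrank_span_vE hX T, ?_⟩
  intro x hx
  obtain ⟨u, hsum, -⟩ := key_quad hX T c x hx
  have : x ⬝ᵥ (X *ᵥ x) - c * (x ⬝ᵥ x) ≤ 0 := by
    rw [hsum]
    apply Finset.sum_nonpos
    intro i _
    have hi : hX.eigenvalues i.1 ≤ c := (Finset.mem_filter.mp i.2).2
    exact mul_nonpos_of_nonpos_of_nonneg (by linarith) (sq_nonneg _)
  linarith

lemma exists_gt_subspace (hX : X.IsHermitian) (c : ℝ) :
    ∃ W : Submodule ℝ (Fin n → ℝ),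
      Module.finrank ℝ W = (Finset.univ.filter fun i => c < hX.eigenvalues i).card ∧
      ∀ x ∈ W, x ≠ 0 → c * (x ⬝ᵥ x) < x ⬝ᵥ (X *ᵥ x) := by
  set T := Finset.univ.filter fun i => c < hX.eigenvalues i with hT
  refine ⟨Submodule.span ℝ (Set.range fun i : T => vE hX i), finrank_span_vE hX T, ?_⟩
  intro x hx hx0
  obtain ⟨u, hsum, hnz⟩ := key_quad hX T c x hx
  obtain ⟨i0, hi0⟩ := hnz hx0
  have : 0 < x ⬝ᵥ (X *ᵥ x) - c * (x ⬝ᵥ x) := by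
    rw [hsum]
    apply Finset.sum_pos'
    · intro i _
      have hi : c < hX.eigenvalues i.1 := (Finset.mem_filter.mp i.2).2
      exact mul_nonneg (by linarith) (sq_nonneg _)
    · refine ⟨i0, Finset.mem_univ _, ?_⟩
      have hi : c < hX.eigenvalues i0.1 := (Finset.mem_filter.mp i0.2).2
      exact mul_pos (by linarith) (by positivity)
  linarith

lemma subspace_le_count_ge (hX : X.IsHermitian) (c : ℝ) (W : Submodule ℝ (Fin n → ℝ))
    (hW : ∀ x ∈ W, c * (x ⬝ᵥ x) ≤ x ⬝ᵥ (X *ᵥ x)) :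
    Module.finrank ℝ W ≤ (Finset.univ.filter fun i => c ≤ hX.eigenvalues i).card := by
  by_contra hcon
  push_neg at hcon
  set T' := Finset.univ.filter fun i => ¬ c ≤ hX.eigenvalues i with hT'
  set U := Submodule.span ℝ (Set.range fun i : T' => vE hX i) with hU
  have hcards : (Finset.univ.filter fun i => c ≤ hX.eigenvalues i).card + T'.card = n := by
    rw [hT']
    simpa using Finset.card_filter_add_card_filter_not
      (s := (Finset.univ : Finset (Fin n))) (p := fun i => c ≤ hX.eigenvalues i)
  have hUdim : Module.finrank ℝ U = T'.card := finrank_span_vE hX T'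
  obtain ⟨x, hxW, hxU, hx0⟩ := exists_ne_zero_mem_inf W U (by
    rw [hUdim]
    omega)
  obtain ⟨u, hsum, hnz⟩ := key_quad hX T' c x hxU
  obtain ⟨i0, hi0⟩ := hnz hx0
  have hneg : x ⬝ᵥ (X *ᵥ x) - c * (x ⬝ᵥ x) < 0 := by
    rw [hsum]
    have h0 : (0:ℝ) = ∑ i : T', (0:ℝ) := by simp
    rw [h0]
    apply Finset.sum_lt_sum
    · intro i _
      have hi : hX.eigenvalues i.1 < c := not_le.mp (Finset.mem_filter.mp i.2).2
      exact mul_nonpos_of_nonpos_of_nonneg (by linarith) (sq_nonneg _)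
    · refine ⟨i0, Finset.mem_univ _, ?_⟩
      have hi : hX.eigenvalues i0.1 < c := not_le.mp (Finset.mem_filter.mp i0.2).2
      have := mul_pos (show (0:ℝ) < c - hX.eigenvalues i0.1 by linarith)
        (show (0:ℝ) < u i0 ^ 2 by positivity)
      nlinarith
  have := hW x hxW
  linarith

lemma subspace_le_count_lt (hX : X.IsHermitian) (c : ℝ) (W : Submodule ℝ (Fin n → ℝ))
    (hW : ∀ x ∈ W, x ≠ 0 → x ⬝ᵥ (X *ᵥ x) < c * (x ⬝ᵥ x)) :
    Module.finrank ℝ W ≤ (Finset.univ.filter fun i => hX.eigenvalues i < c).card := by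
  by_contra hcon
  push_neg at hcon
  set T' := Finset.univ.filter fun i => ¬ hX.eigenvalues i < c with hT'
  set U := Submodule.span ℝ (Set.range fun i : T' => vE hX i) with hU
  have hcards : (Finset.univ.filter fun i => hX.eigenvalues i < c).card + T'.card = n := by
    rw [hT']
    simpa using Finset.card_filter_add_card_filter_not
      (s := (Finset.univ : Finset (Fin n))) (p := fun i => hX.eigenvalues i < c)
  have hUdim : Module.finrank ℝ U = T'.card := finrank_span_vE hX T'
  obtain ⟨x, hxW, hxU, hx0⟩ := exists_ne_zero_mem_inf W U (by
    rw [hUdim]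
    omega)
  obtain ⟨u, hsum, -⟩ := key_quad hX T' c x hxU
  have hge : 0 ≤ x ⬝ᵥ (X *ᵥ x) - c * (x ⬝ᵥ x) := by
    rw [hsum]
    apply Finset.sum_nonneg
    intro i _
    have hi : c ≤ hX.eigenvalues i.1 := not_lt.mp (Finset.mem_filter.mp i.2).2
    exact mul_nonneg (by linarith) (sq_nonneg _)
  have := hW x hxW hx0
  linarith

lemma finrank_map_mulVecLin (P : Matrix (Fin n) (Fin n) ℝ) (hP : IsUnit P.det)
    (W : Submodule ℝ (Fin n → ℝ)) :
    Module.finrank ℝ (W.map P.mulVecLin) = Module.finrank ℝ W := by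
  refine le_antisymm (Submodule.finrank_map_le _ _) ?_
  have : (W.map P.mulVecLin).map P⁻¹.mulVecLin = W := by
    rw [← Submodule.map_comp, ← Matrix.mulVecLin_mul, Matrix.nonsing_inv_mul _ hP,
      Matrix.mulVecLin_one, Submodule.map_id]
  conv_lhs => rw [← this]
  exact Submodule.finrank_map_le _ _

open Matrix Finset

variable {n : ℕ}

lemma isHermitian_of_symm (M : Matrix (Fin n) (Fin n) ℝ) (h : Mᵀ = M) : M.IsHermitian := by
  have : Mᴴ = Mᵀ := by
    ext i j
    simp [Matrix.conjTranspose_apply]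
  rw [Matrix.IsHermitian, this, h]

lemma dot_shift (P : Matrix (Fin n) (Fin n) ℝ) (hP : Pᵀ = P) (v w : Fin n → ℝ) :
    (P *ᵥ v) ⬝ᵥ w = v ⬝ᵥ (P *ᵥ w) := by
  calc (P *ᵥ v) ⬝ᵥ w = w ⬝ᵥ (P *ᵥ v) := dotProduct_comm _ _
    _ = (w ᵥ* P) ⬝ᵥ v := Matrix.dotProduct_mulVec _ _ _
    _ = (P *ᵥ w) ⬝ᵥ v := by conv_lhs => rw [← hP, Matrix.vecMul_transpose]
    _ = v ⬝ᵥ (P *ᵥ w) := dotProduct_comm _ _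

/-- counts from a sorted eigenvalue position -/
lemma count_le_of_sort (f : Fin n → ℝ) (q : Fin n) :
    q.1 + 1 ≤ (Finset.univ.filter fun i => f i ≤ f (Tuple.sort f q)).card := by
  have hmono := Tuple.monotone_sort f
  have hsub : (Finset.Iic q).image (Tuple.sort f)
      ⊆ Finset.univ.filter fun i => f i ≤ f (Tuple.sort f q) := by
    intro i hi
    obtain ⟨j, hj, rfl⟩ := Finset.mem_image.mp hi
    refine Finset.mem_filter.mpr ⟨Finset.mem_univ _, ?_⟩
    exact hmono (Finset.mem_Iic.mp hj)
  calc q.1 + 1 = (Finset.Iic q).card := (Fin.card_Iic q).symm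
    _ = ((Finset.Iic q).image (Tuple.sort f)).card :=
        (Finset.card_image_of_injective _ (Tuple.sort f).injective).symm
    _ ≤ _ := Finset.card_le_card hsub

lemma count_lt_of_sort (f : Fin n → ℝ) (q : Fin n) :
    (Finset.univ.filter fun i => f i < f (Tuple.sort f q)).card ≤ q.1 := by
  have hmono := Tuple.monotone_sort f
  have hsub : (Finset.univ.filter fun i => f i < f (Tuple.sort f q))
      ⊆ (Finset.Iio q).image (Tuple.sort f) := by
    intro i hi
    have hlt : f i < f (Tuple.sort f q) := (Finset.mem_filter.mp hi).2
    refine Finset.mem_image.mpr ⟨(Tuple.sort f).symm i, ?_, by simp⟩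
    rw [Finset.mem_Iio]
    by_contra hge
    push_neg at hge
    have := hmono hge
    simp only [Function.comp_apply, Equiv.apply_symm_apply] at this
    exact absurd this (not_le.mpr hlt)
  calc (Finset.univ.filter fun i => f i < f (Tuple.sort f q)).card
      ≤ ((Finset.Iio q).image (Tuple.sort f)).card := Finset.card_le_card hsub
    _ = (Finset.Iio q).card := Finset.card_image_of_injective _ (Tuple.sort f).injective
    _ = q.1 := Fin.card_Iio q

/-- If exactly the right number of elements lie strictly below and weakly below `a`,
then position `k` of the sorted list is `a`. -/
lemma sorted_getD_eq {m : Multiset ℝ} {n k : ℕ} {a : ℝ} (hcard : Multiset.card m = n)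
    (hk : k < n) (h1 : Multiset.countP (fun x => x < a) m ≤ k)
    (h2 : k < Multiset.countP (fun x => x ≤ a) m) :
    (m.sort (· ≤ ·)).getD k 0 = a := by
  set l := m.sort (· ≤ ·) with hl
  have hml : (l : Multiset ℝ) = m := Multiset.sort_eq _ _
  have hlen : l.length = n := by rw [hl, Multiset.length_sort, hcard]
  have hsort : l.Pairwise (· ≤ ·) := Multiset.pairwise_sort _ _
  have hpair := (List.pairwise_iff_getElem).mp hsort
  have hk' : k < l.length := by omega
  have hgd : l.getD k 0 = l[k] := List.getD_eq_getElem l 0 hk'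
  rw [hgd]
  have hc1 : Multiset.countP (fun x => x < a) m = l.countP (fun x => decide (x < a)) := by
    rw [← hml]; rfl
  have hc2 : Multiset.countP (fun x => x ≤ a) m = l.countP (fun x => decide (x ≤ a)) := by
    rw [← hml]; rfl
  rcases lt_trichotomy l[k] a with hb | hb | hb
  · exfalso
    -- all elements of take (k+1) are < a
    have hall : ∀ x ∈ l.take (k + 1), decide (x < a) = true := by
      intro x hx
      obtain ⟨i, hi, hieq⟩ := List.getElem_of_mem hx
      have hi' : i < k + 1 := by
        have : (l.take (k+1)).length = min (k+1) l.length := List.length_take; omega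
      have hgte : (l.take (k+1))[i] = l[i] := List.getElem_take
      simp only [decide_eq_true_eq]
      rcases Nat.lt_or_ge i k with h | h
      · have := hpair i k (by omega) (by omega) h
        rw [← hieq, hgte]; exact lt_of_le_of_lt this hb
      · have : i = k := by omega
        subst this; rw [← hieq, hgte]; exact hb
    have hsub : (l.take (k+1)).Sublist l := List.take_sublist _ _
    have hfilter : (l.take (k+1)).filter (fun x => decide (x < a)) = l.take (k+1) :=
      List.filter_eq_self.mpr hall
    have hlen2 : (l.take (k+1)).length = k + 1 := by
      rw [List.length_take]; omega
    have : k + 1 ≤ l.countP (fun x => decide (x < a)) := by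
      rw [List.countP_eq_length_filter]
      calc k + 1 = ((l.take (k+1)).filter (fun x => decide (x < a))).length := by
            rw [hfilter, hlen2]
        _ ≤ (l.filter (fun x => decide (x < a))).length :=
            (hsub.filter _).length_le
    omega
  · exact hb
  · exfalso
    -- all elements of drop k are > a
    have hall : ∀ x ∈ l.drop k, (!decide (x ≤ a)) = true := by
      intro x hx
      obtain ⟨i, hi, hieq⟩ := List.getElem_of_mem hx
      have hki : k + i < l.length := by
        have : (l.drop k).length = l.length - k := List.length_drop; omega
      have hgte : (l.drop k)[i] = l[k + i] := List.getElem_drop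
      simp only [Bool.not_eq_true', decide_eq_false_iff_not, not_le]
      rcases Nat.eq_zero_or_pos i with h | h
      · subst h; rw [← hieq, hgte]; simpa using hb
      · have := hpair k (k + i) hk' hki (by omega)
        rw [← hieq, hgte]; exact lt_of_lt_of_le hb this
    have hcnt : (l.drop k).length ≤ l.countP (fun x => !decide (x ≤ a)) := by
      rw [List.countP_eq_length_filter]
      have hfilter : (l.drop k).filter (fun x => !decide (x ≤ a)) = l.drop k :=
        List.filter_eq_self.mpr hall
      calc (l.drop k).length = ((l.drop k).filter (fun x => !decide (x ≤ a))).length := by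
            rw [hfilter]
        _ ≤ _ := ((l.drop_sublist k).filter _).length_le
    have hdl : (l.drop k).length = n - k := by rw [List.length_drop]; omega
    have hsplit : l.length = l.countP (fun x => decide (x ≤ a))
        + l.countP (fun x => !decide (x ≤ a)) := by
      rw [List.countP_eq_length_filter, List.countP_eq_length_filter, ← List.length_append,
        ← List.filter_append_perm (fun x => decide (x ≤ a)) l |>.length_eq]
    omega

/-- if the `p`-th smallest eigenvalue `s` of `D - r•A` is negative,
then `1/r` is the `p`-th largest eigenvalue of `L = (D + (-s)I)⁻¹ A` (whose `n`
eigenvalues are all real), and eigenvectors of `D - r•A` for `s` are eigenvectors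
of `L` for `1/r`. -/
theorem stmt0 {n : ℕ} (A D : Matrix (Fin n) (Fin n) ℝ)
    (hAsymm : Aᵀ = A) (hA01 : ∀ i j, A i j = 0 ∨ A i j = 1) (hAdiag : ∀ i, A i i = 0)
    (hD : D = Matrix.diagonal fun i => ∑ j, A i j)
    (r : ℝ) (hr : 1 < r) (p : ℕ) (hp2 : 2 ≤ p) (hpn : p ≤ n)
    (hH : (D - r • A).IsHermitian)
    (hneg : sortEig hH ⟨p - 1, by omega⟩ < 0) :
    (((D + (-(sortEig hH ⟨p - 1, by omega⟩)) • 1)⁻¹ * A).charpoly.roots.card = n) ∧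
    kthLargestRoot ((D + (-(sortEig hH ⟨p - 1, by omega⟩)) • 1)⁻¹ * A) (p - 1) = 1 / r ∧
    ∀ x : Fin n → ℝ, (D - r • A) *ᵥ x = sortEig hH ⟨p - 1, by omega⟩ • x →
      ((D + (-(sortEig hH ⟨p - 1, by omega⟩)) • 1)⁻¹ * A) *ᵥ x = (1 / r) • x := by
  have hn2 : 2 ≤ n := le_trans hp2 hpn
  set s := sortEig hH ⟨p - 1, by omega⟩ with hsdef
  have hs_neg : s < 0 := hneg
  set τ : ℝ := -s with hτdef
  have hτ : 0 < τ := by rw [hτdef]; linarith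
  set deg : Fin n → ℝ := fun i => ∑ j, A i j with hdegdef
  have hdeg0 : ∀ i, 0 ≤ deg i := fun i => Finset.sum_nonneg fun j _ => by
    rcases hA01 i j with h | h <;> simp [h]
  set d : Fin n → ℝ := fun i => deg i + τ with hddef
  have hd0 : ∀ i, 0 < d i := fun i => by have := hdeg0 i; rw [hddef]; positivity
  set e : Fin n → ℝ := fun i => Real.sqrt (d i) with hedef
  have he0 : ∀ i, 0 < e i := fun i => Real.sqrt_pos.mpr (hd0 i)
  have hee : ∀ i, e i * e i = d i := fun i => Real.mul_self_sqrt (hd0 i).le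
  set B := D + τ • (1 : Matrix (Fin n) (Fin n) ℝ) with hBdef
  have hBdiag : B = Matrix.diagonal d := by
    rw [hBdef, hD, Matrix.smul_one_eq_diagonal, Matrix.diagonal_add, hddef, hdegdef]
  set E := Matrix.diagonal e with hEdef
  have hEsym : Eᵀ = E := Matrix.diagonal_transpose e
  have hEdet : IsUnit E.det := by
    rw [hEdef, Matrix.det_diagonal]
    exact isUnit_iff_ne_zero.mpr (Finset.prod_ne_zero_iff.mpr fun i _ => (he0 i).ne')
  have hBdet : IsUnit B.det := by
    rw [hBdiag, Matrix.det_diagonal]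
    exact isUnit_iff_ne_zero.mpr (Finset.prod_ne_zero_iff.mpr fun i _ => (hd0 i).ne')
  have hEE : E * E = B := by
    rw [hEdef, Matrix.diagonal_mul_diagonal, hBdiag]
    exact congrArg Matrix.diagonal (funext hee)
  have hEiE : E⁻¹ * E = 1 := Matrix.nonsing_inv_mul _ hEdet
  have hEEi : E * E⁻¹ = 1 := Matrix.mul_nonsing_inv _ hEdet
  have hEinvsym : (E⁻¹)ᵀ = E⁻¹ := by rw [Matrix.transpose_nonsing_inv, hEsym]
  set S := E⁻¹ * A * E⁻¹ with hSdef
  have hSsym : Sᵀ = S := by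
    rw [hSdef, Matrix.transpose_mul, Matrix.transpose_mul, hEinvsym, hAsymm, Matrix.mul_assoc]
  have hSherm : S.IsHermitian := isHermitian_of_symm S hSsym
  set L := B⁻¹ * A with hLdef
  have hBinv : B⁻¹ = E⁻¹ * E⁻¹ := by rw [← hEE, Matrix.mul_inv_rev]
  have hLS : L = E⁻¹ * S * E := by
    rw [hLdef, hBinv, hSdef]
    simp only [Matrix.mul_assoc, hEiE, Matrix.mul_one]
  have hcharL : L.charpoly = S.charpoly := by
    have hdet' : IsUnit (E⁻¹).det := Matrix.isUnit_nonsing_inv_det _ hEdet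
    have hEE' : E = (E⁻¹)⁻¹ := (Matrix.nonsing_inv_nonsing_inv _ hEdet).symm
    calc L.charpoly = (E⁻¹ * S * (E⁻¹)⁻¹).charpoly := by rw [← hEE', ← hLS]
      _ = S.charpoly := charpoly_conj' _ _ hdet'
  have hroots : L.charpoly.roots = Multiset.map hSherm.eigenvalues Finset.univ.val := by
    rw [hcharL]
    exact roots_charpoly S hSherm
  refine ⟨?_, ?_, ?_⟩
  · rw [hroots]
    simp
  · -- quadratic form identities
    have hI1 : ∀ z, (E *ᵥ z) ⬝ᵥ (S *ᵥ (E *ᵥ z)) = z ⬝ᵥ (A *ᵥ z) := by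
      intro z
      have h1 : S *ᵥ (E *ᵥ z) = E⁻¹ *ᵥ (A *ᵥ z) := by
        rw [Matrix.mulVec_mulVec, hSdef, Matrix.mul_assoc (E⁻¹ * A), hEiE, Matrix.mul_one,
          ← Matrix.mulVec_mulVec]
      rw [h1, dot_shift E hEsym, Matrix.mulVec_mulVec, hEEi, Matrix.one_mulVec]
    have hI2 : ∀ z, (E *ᵥ z) ⬝ᵥ (E *ᵥ z) = z ⬝ᵥ (B *ᵥ z) := by
      intro z
      rw [dot_shift E hEsym, Matrix.mulVec_mulVec, hEE]
    have hI3 : ∀ z : Fin n → ℝ, z ⬝ᵥ ((D - r • A) *ᵥ z) - s * (z ⬝ᵥ z)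
        = z ⬝ᵥ (B *ᵥ z) - r * (z ⬝ᵥ (A *ᵥ z)) := by
      intro z
      rw [Matrix.sub_mulVec, hBdef, Matrix.add_mulVec, Matrix.smul_mulVec,
        Matrix.smul_mulVec, Matrix.one_mulVec, dotProduct_sub,
        dotProduct_add, dotProduct_smul, dotProduct_smul, hτdef]
      simp only [smul_eq_mul]
      ring
    have hr0 : (0:ℝ) < r := by linarith
    have hp1n : p - 1 < n := by omega
    have hsq : s = hH.eigenvalues (Tuple.sort hH.eigenvalues ⟨p-1, hp1n⟩) := by rw [hsdef]; rfl
    have hMle : p ≤ (Finset.univ.filter fun i => hH.eigenvalues i ≤ s).card := by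
      have h := count_le_of_sort hH.eigenvalues ⟨p-1, hp1n⟩
      rw [← hsq] at h
      have hv : ((⟨p - 1, hp1n⟩ : Fin n) : ℕ) = p - 1 := rfl
      rw [hv] at h
      omega
    have hMlt : (Finset.univ.filter fun i => hH.eigenvalues i < s).card ≤ p - 1 := by
      have h := count_lt_of_sort hH.eigenvalues ⟨p-1, hp1n⟩
      rw [← hsq] at h
      have hv : ((⟨p - 1, hp1n⟩ : Fin n) : ℕ) = p - 1 := rfl
      rw [hv] at h
      exact h
    have hSge : p ≤ (Finset.univ.filter fun i => 1/r ≤ hSherm.eigenvalues i).card := by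
      obtain ⟨W, hWdim, hWq⟩ := exists_le_subspace hH s
      have hWdim' : Module.finrank ℝ (W.map E.mulVecLin) = Module.finrank ℝ W :=
        finrank_map_mulVecLin E hEdet W
      have hprop : ∀ x ∈ W.map E.mulVecLin, (1/r) * (x ⬝ᵥ x) ≤ x ⬝ᵥ (S *ᵥ x) := by
        intro x hxm
        obtain ⟨z, hz, rfl⟩ := Submodule.mem_map.mp hxm
        have hq := hWq z hz
        have h3 := hI3 z
        simp only [Matrix.mulVecLin_apply]
        rw [hI1 z, hI2 z]
        have hBA : z ⬝ᵥ (B *ᵥ z) ≤ r * (z ⬝ᵥ (A *ᵥ z)) := by linarith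
        rw [div_mul_eq_mul_div, one_mul, div_le_iff₀ hr0, mul_comm]
        exact le_trans hBA (by nlinarith [hBA])
      have hle := subspace_le_count_ge hSherm (1/r) (W.map E.mulVecLin) hprop
      omega
    have hSgt : (Finset.univ.filter fun i => 1/r < hSherm.eigenvalues i).card ≤ p - 1 := by
      obtain ⟨W, hWdim, hWq⟩ := exists_gt_subspace hSherm (1/r)
      have hWdim' : Module.finrank ℝ (W.map (E⁻¹).mulVecLin) = Module.finrank ℝ W :=
        finrank_map_mulVecLin E⁻¹ (Matrix.isUnit_nonsing_inv_det _ hEdet) W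
      have hprop : ∀ z ∈ W.map (E⁻¹).mulVecLin, z ≠ 0 →
          z ⬝ᵥ ((D - r • A) *ᵥ z) < s * (z ⬝ᵥ z) := by
        intro z hzm hz0
        obtain ⟨x, hxW, hxz⟩ := Submodule.mem_map.mp hzm
        have hxz' : E⁻¹ *ᵥ x = z := hxz
        have hx_of_z : E *ᵥ z = x := by
          rw [← hxz', Matrix.mulVec_mulVec, hEEi, Matrix.one_mulVec]
        have hx0 : x ≠ 0 := by
          intro h
          apply hz0
          rw [← hxz', h, Matrix.mulVec_zero]
        have hq := hWq x hxW hx0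
        rw [← hx_of_z, hI1 z, hI2 z] at hq
        have h3 := hI3 z
        have hq' : z ⬝ᵥ (B *ᵥ z) < r * (z ⬝ᵥ (A *ᵥ z)) := by
          have h2 := mul_lt_mul_of_pos_left hq hr0
          rw [← mul_assoc, mul_one_div, div_self (ne_of_gt hr0), one_mul] at h2
          exact h2
        linarith
      have hle := subspace_le_count_lt hH s (W.map (E⁻¹).mulVecLin) hprop
      omega
    have hcompl1 : (Finset.univ.filter fun i => hSherm.eigenvalues i < 1/r).card
        + (Finset.univ.filter fun i => 1/r ≤ hSherm.eigenvalues i).card = n := by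
      have h := Finset.card_filter_add_card_filter_not
        (s := (Finset.univ : Finset (Fin n))) (p := fun i => hSherm.eigenvalues i < 1/r)
      simpa [not_lt] using h
    have hcompl2 : (Finset.univ.filter fun i => hSherm.eigenvalues i ≤ 1/r).card
        + (Finset.univ.filter fun i => 1/r < hSherm.eigenvalues i).card = n := by
      have h := Finset.card_filter_add_card_filter_not
        (s := (Finset.univ : Finset (Fin n))) (p := fun i => hSherm.eigenvalues i ≤ 1/r)
      simpa [not_le] using h
    show (L.charpoly.roots.sort (· ≤ ·)).getD (n - 1 - (p - 1)) 0 = 1/r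
    rw [hroots]
    apply sorted_getD_eq (n := n)
    · simp
    · omega
    · rw [Multiset.countP_map]
      have hcv : Multiset.card (Multiset.filter (fun i => hSherm.eigenvalues i < 1/r)
          (Finset.univ : Finset (Fin n)).val)
          = (Finset.univ.filter fun i => hSherm.eigenvalues i < 1/r).card := rfl
      rw [hcv]
      omega
    · rw [Multiset.countP_map]
      have hcv : Multiset.card (Multiset.filter (fun i => hSherm.eigenvalues i ≤ 1/r)
          (Finset.univ : Finset (Fin n)).val)
          = (Finset.univ.filter fun i => hSherm.eigenvalues i ≤ 1/r).card := rfl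
      rw [hcv]
      omega
  · intro x hx
    have h1 : D *ᵥ x - r • (A *ᵥ x) = s • x := by
      rw [← Matrix.smul_mulVec, ← Matrix.sub_mulVec]
      exact hx
    have hBx : B *ᵥ x = r • (A *ᵥ x) := by
      rw [hBdef, Matrix.add_mulVec, Matrix.smul_mulVec, Matrix.one_mulVec]
      have hDx : D *ᵥ x = s • x + r • (A *ᵥ x) := by
        rw [← h1]
        abel
      rw [hDx, hτdef]
      module
    have hrne : r ≠ 0 := by linarith
    have hAx : A *ᵥ x = (1/r) • (B *ᵥ x) := by
      rw [hBx, smul_smul, one_div, inv_mul_cancel₀ hrne, one_smul]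
    show L *ᵥ x = (1/r) • x
    rw [hLdef, ← Matrix.mulVec_mulVec, hAx, Matrix.mulVec_smul, Matrix.mulVec_mulVec,
      Matrix.nonsing_inv_mul _ hBdet, Matrix.one_mulVec]
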